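/- Let D be a finite set of tuples partitioned into (D^en, D^ex) with |D^en| = N, and let p be the probabilistic database defined by p(W) := 1/2^N if D^ex ⊆ W and p(W) := 0 otherwise. Then for every query Q : Finset D → ℝ and every τ ∈ D^en, the causal-effect score equals the Banzhaf power index: CE(p,Q,τ) = Σ_{W ⊆ D^en \ {τ}} Δ(Q,W,τ) / 2^{N−1}. -/

import Mathlib

open Finset

variable {α : Type*} [DecidableEq α]

/-- The positively intervened distribution `p^{+τ}`:
`p^{+τ}(W) = Σ_{W' ⊆ D, W' ∪ {τ} = W} p(W')`. -/
noncomputable def pPlus (D : Finset α) (p : Finset α → ℝ) (τ : α) (W : Finset α) : ℝ :=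
  ∑ W' ∈ D.powerset.filter (fun W' => W' ∪ {τ} = W), p W'

/-- The negatively intervened distribution `p^{−τ}`:
`p^{−τ}(W) = Σ_{W' ⊆ D, W' \ {τ} = W} p(W')`. -/
noncomputable def pMinus (D : Finset α) (p : Finset α → ℝ) (τ : α) (W : Finset α) : ℝ :=
  ∑ W' ∈ D.powerset.filter (fun W' => W' \ {τ} = W), p W'

/-- The generalized causal-effect score of tuple `τ` for query `Q` on the PDB `p` over `D`:
`CE(p,Q,τ) = Σ_{W ⊆ D} p^{+τ}(W)·Q[W] − Σ_{W ⊆ D} p^{−τ}(W)·Q[W]`. -/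
noncomputable def CE (D : Finset α) (p : Finset α → ℝ) (Q : Finset α → ℝ) (τ : α) : ℝ :=
  ∑ W ∈ D.powerset, pPlus D p τ W * Q W - ∑ W ∈ D.powerset, pMinus D p τ W * Q W

/-- `Δ(Q,W,τ) = Q[W ∪ D^ex ∪ {τ}] − Q[W ∪ D^ex]`. -/
noncomputable def Delta (Dex : Finset α) (Q : Finset α → ℝ) (W : Finset α) (τ : α) : ℝ :=
  Q (W ∪ Dex ∪ {τ}) - Q (W ∪ Dex)

/-- For the uniform `U(1/2)` tuple-independent PDB (probability `1/2^N` on each world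
containing `D^ex`, where `N = |D^en|`), the causal-effect score equals the Banzhaf power
index: `CE(p,Q,τ) = Σ_{W ⊆ D^en \ {τ}} Δ(Q,W,τ) / 2^{N−1}`. -/
theorem stmt2 (D Den Dex : Finset α)
    (hunion : Den ∪ Dex = D) (hdisj : Disjoint Den Dex)
    (Q : Finset α → ℝ) (τ : α) (hτ : τ ∈ Den) :
    CE D (fun W => if Dex ⊆ W then 1 / 2 ^ Den.card else 0) Q τ =
      ∑ W ∈ (Den.erase τ).powerset, Delta Dex Q W τ / 2 ^ (Den.card - 1) := by
  classical
  set p : Finset α → ℝ := fun W => if Dex ⊆ W then 1 / 2 ^ Den.card else 0 with hp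
  have hτD : τ ∈ D := by rw [← hunion]; exact mem_union_left _ hτ
  have hτex : τ ∉ Dex := fun h => Finset.disjoint_left.mp hdisj hτ h
  have key : ∀ (f : Finset α → Finset α), (∀ W' ∈ D.powerset, f W' ∈ D.powerset) →
      ∑ W ∈ D.powerset, (∑ W' ∈ D.powerset.filter (fun W' => f W' = W), p W') * Q W
        = ∑ W' ∈ D.powerset, p W' * Q (f W') := by
    intro f hf
    rw [← Finset.sum_fiberwise_of_maps_to hf (fun W' => p W' * Q (f W'))]
    refine Finset.sum_congr rfl fun W _ => ?_
    rw [Finset.sum_mul]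
    refine Finset.sum_congr rfl fun W' hW' => ?_
    rw [(Finset.mem_filter.mp hW').2]
  have h1 : ∑ W ∈ D.powerset, pPlus D p τ W * Q W
      = ∑ W' ∈ D.powerset, p W' * Q (W' ∪ {τ}) := by
    apply key
    intro W' hW'
    simp only [mem_powerset] at *
    exact union_subset hW' (by simpa using hτD)
  have h2 : ∑ W ∈ D.powerset, pMinus D p τ W * Q W
      = ∑ W' ∈ D.powerset, p W' * Q (W' \ {τ}) := by
    apply key
    intro W' hW'
    simp only [mem_powerset] at *
    exact (sdiff_subset).trans hW'
  rw [CE, h1, h2, ← Finset.sum_sub_distrib]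
  have h3 : ∑ W' ∈ D.powerset, (p W' * Q (W' ∪ {τ}) - p W' * Q (W' \ {τ}))
      = ∑ W' ∈ D.powerset.filter (fun W' => Dex ⊆ W'),
          (1 / 2 ^ Den.card) * (Q (W' ∪ {τ}) - Q (W' \ {τ})) := by
    rw [Finset.sum_filter]
    refine Finset.sum_congr rfl fun W' _ => ?_
    by_cases h : Dex ⊆ W' <;> simp [hp, h, mul_sub]
  rw [h3]
  have h4 : ∑ W' ∈ D.powerset.filter (fun W' => Dex ⊆ W'),
        (1 / 2 ^ Den.card : ℝ) * (Q (W' ∪ {τ}) - Q (W' \ {τ}))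
      = ∑ S ∈ Den.powerset,
        (1 / 2 ^ Den.card : ℝ) * (Q ((S ∪ Dex) ∪ {τ}) - Q ((S ∪ Dex) \ {τ})) := by
    refine Finset.sum_nbij' (fun W => W ∩ Den) (fun S => S ∪ Dex) ?_ ?_ ?_ ?_ ?_
    · intro W hW
      simp only [mem_filter, mem_powerset] at *
      exact inter_subset_right
    · intro S hS
      simp only [mem_filter, mem_powerset] at *
      refine ⟨union_subset (hS.trans ?_) ?_, subset_union_right⟩
      · rw [← hunion]; exact subset_union_left
      · rw [← hunion]; exact subset_union_right
    · intro W hW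
      simp only [mem_filter, mem_powerset] at hW
      obtain ⟨hWD, hexW⟩ := hW
      ext x
      simp only [mem_union, mem_inter]
      constructor
      · rintro (⟨hx, _⟩ | hx)
        · exact hx
        · exact hexW hx
      · intro hx
        rcases mem_union.mp (hunion ▸ hWD hx) with h | h
        · exact Or.inl ⟨hx, h⟩
        · exact Or.inr h
    · intro S hS
      simp only [mem_powerset] at hS
      ext x
      simp only [mem_inter, mem_union]
      constructor
      · rintro ⟨hx | hx, hxd⟩
        · exact hx
        · exact absurd hxd (Finset.disjoint_right.mp hdisj hx)
      · intro hx; exact ⟨Or.inl hx, hS hx⟩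
    · intro W hW
      simp only [mem_filter, mem_powerset] at hW
      obtain ⟨hWD, hexW⟩ := hW
      have : (W ∩ Den) ∪ Dex = W := by
        ext x
        simp only [mem_union, mem_inter]
        constructor
        · rintro (⟨hx, _⟩ | hx)
          · exact hx
          · exact hexW hx
        · intro hx
          rcases mem_union.mp (hunion ▸ hWD hx) with h | h
          · exact Or.inl ⟨hx, h⟩
          · exact Or.inr h
      rw [this]
  rw [h4]
  have hDen : Den = insert τ (Den.erase τ) := (insert_erase hτ).symm
  have hτe : τ ∉ Den.erase τ := notMem_erase _ _
  have hN : (Den.erase τ).card + 1 = Den.card := Finset.card_erase_add_one hτ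
  have hsplit : ∑ S ∈ Den.powerset,
        (1 / 2 ^ Den.card : ℝ) * (Q ((S ∪ Dex) ∪ {τ}) - Q ((S ∪ Dex) \ {τ}))
      = ∑ T ∈ (Den.erase τ).powerset,
          (1 / 2 ^ Den.card : ℝ) * (Q ((T ∪ Dex) ∪ {τ}) - Q ((T ∪ Dex) \ {τ}))
        + ∑ T ∈ (Den.erase τ).powerset,
          (1 / 2 ^ Den.card : ℝ) * (Q ((insert τ T ∪ Dex) ∪ {τ}) - Q ((insert τ T ∪ Dex) \ {τ})) := by
    conv_lhs => rw [show Den.powerset = (insert τ (Den.erase τ)).powerset by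
      rw [insert_erase hτ]]
    exact Finset.sum_powerset_insert hτe fun S =>
      (1 / 2 ^ Den.card : ℝ) * (Q ((S ∪ Dex) ∪ {τ}) - Q ((S ∪ Dex) \ {τ}))
  rw [hsplit]
  have hterm : ∀ T ∈ (Den.erase τ).powerset,
      (1 / 2 ^ Den.card : ℝ) * (Q ((T ∪ Dex) ∪ {τ}) - Q ((T ∪ Dex) \ {τ}))
        + (1 / 2 ^ Den.card : ℝ) * (Q ((insert τ T ∪ Dex) ∪ {τ}) - Q ((insert τ T ∪ Dex) \ {τ}))
      = Delta Dex Q T τ / 2 ^ (Den.card - 1) := by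
    intro T hT
    simp only [mem_powerset] at hT
    have hτT : τ ∉ T := fun h => hτe (hT h)
    have e1 : (T ∪ Dex) \ {τ} = T ∪ Dex := by
      ext x
      simp only [mem_sdiff, mem_union, mem_singleton]
      constructor
      · rintro ⟨hx, _⟩; exact hx
      · intro hx
        refine ⟨hx, fun h => ?_⟩
        rcases hx with h' | h'
        · exact hτT (h ▸ h')
        · exact hτex (h ▸ h')
    have e2 : (insert τ T ∪ Dex) ∪ {τ} = (T ∪ Dex) ∪ {τ} := by
      ext x; simp only [mem_union, mem_insert, mem_singleton]; tauto
    have e3 : (insert τ T ∪ Dex) \ {τ} = T ∪ Dex := by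
      ext x
      simp only [mem_sdiff, mem_union, mem_insert, mem_singleton]
      constructor
      · rintro ⟨hx | hx, h⟩
        · rcases hx with h' | h'
          · exact absurd h' h
          · exact Or.inl h'
        · exact Or.inr hx
      · rintro (hx | hx)
        · exact ⟨Or.inl (Or.inr hx), fun h => hτT (h ▸ hx)⟩
        · exact ⟨Or.inr hx, fun h => hτex (h ▸ hx)⟩
    rw [e1, e2, e3, Delta]
    have h5 : Den.card = (Den.card - 1) + 1 := by omega
    rw [h5]
    field_simp
    rw [Nat.add_sub_cancel]
    ring
  rw [← Finset.sum_add_distrib]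
  exact Finset.sum_congr rfl hterm
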